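/- arXiv:1202.4344 — 3 statements merged into one kernel-verified Lean document; each statement's English description precedes it below -/
import Mathlib

section
/- Let K : ℝ^d → ℝ be continuous, nonnegative, compactly supported, with K(x) > 0 for |x| ≤ R₁ and K(x) = 0 for |x| ≥ R₂, where 0 < R₁ < R₂ < ∞. Then there exists a constant C > 0 (depending only on K, R₁, R₂, d) such that for every nonnegative ρ ∈ L¹(ℝ^d) and every y ∈ ℝ^d, ∫_{ℝ^d} K(x−y) · ρ(x) / (∫_{ℝ^d} K(x−z) ρ(z) dz) dx ≤ C (with the convention that the integrand is 0 where ρ(x) = 0). -/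
open MeasureTheory Metric Set

/-- Kernel normalization lemma (Motsch–Tadmor): uniform bound on
`∫ K(x−y) ρ(x) / (K ⋆ ρ)(x) dx` independent of the nonnegative density `ρ`. -/
theorem kernel_normalization_bound
    (d : ℕ) (hd : 0 < d)
    (K : EuclideanSpace ℝ (Fin d) → ℝ)
    (hKcont : Continuous K) (hKnonneg : ∀ x, 0 ≤ K x)
    (hKsupp : HasCompactSupport K)
    (R₁ R₂ : ℝ) (hR₁ : 0 < R₁) (hR₁₂ : R₁ < R₂)
    (hKpos : ∀ x, ‖x‖ ≤ R₁ → 0 < K x)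
    (hKzero : ∀ x, R₂ ≤ ‖x‖ → K x = 0) :
    ∃ C : ℝ, 0 < C ∧
      ∀ ρ : EuclideanSpace ℝ (Fin d) → ℝ,
        Integrable ρ → (∀ x, 0 ≤ ρ x) →
        ∀ y : EuclideanSpace ℝ (Fin d),
          (∫ x, if ρ x = 0 then 0
                else K (x - y) * ρ x / ∫ z, K (x - z) * ρ z) ≤ C := by
  classical
  -- maximum of K
  obtain ⟨xM, hxM⟩ := hKcont.exists_forall_ge_of_hasCompactSupport hKsupp
  have hMpos : 0 < K xM := lt_of_lt_of_le (hKpos 0 (by simp [hR₁.le])) (hxM 0)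
  set M : ℝ := K xM with hMdef
  -- minimum of K on the closed ball of radius R₁
  obtain ⟨xm, hxmball, hxm⟩ := (isCompact_closedBall (0 : EuclideanSpace ℝ (Fin d)) R₁).exists_isMinOn
    ⟨0, mem_closedBall_self hR₁.le⟩ hKcont.continuousOn
  have hmpos : 0 < K xm := hKpos xm (by simpa [mem_closedBall, dist_eq_norm] using hxmball)
  have hmle : ∀ w : EuclideanSpace ℝ (Fin d), ‖w‖ ≤ R₁ → K xm ≤ K w := by
    intro w hw
    exact hxm (by simpa [mem_closedBall, dist_eq_norm] using hw)
  set m : ℝ := K xm with hmdef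
  -- finite covering of the closed ball of radius R₂ by balls of radius R₁/2
  obtain ⟨t, ht⟩ := (isCompact_closedBall (0 : EuclideanSpace ℝ (Fin d)) R₂).elim_finite_subcover
    (fun c : EuclideanSpace ℝ (Fin d) => ball c (R₁ / 2)) (fun _ => isOpen_ball)
    (fun x _ => mem_iUnion.2 ⟨x, mem_ball_self (by linarith)⟩)
  have htne : t.Nonempty := by
    rcases mem_iUnion₂.1 (ht (mem_closedBall_self (by linarith : (0:ℝ) ≤ R₂))) with ⟨c, hc, -⟩
    exact ⟨c, hc⟩
  have hcardpos : (0:ℝ) < t.card := by exact_mod_cast Finset.card_pos.2 htne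
  refine ⟨t.card * (M / m), mul_pos hcardpos (div_pos hMpos hmpos), ?_⟩
  intro ρ hρint hρnn y
  set g : EuclideanSpace ℝ (Fin d) → ℝ := fun x => ∫ z, K (x - z) * ρ z with hg
  set f : EuclideanSpace ℝ (Fin d) → ℝ := fun x => if ρ x = 0 then 0 else K (x - y) * ρ x / g x with hf
  have hgnn : ∀ x, 0 ≤ g x := fun x =>
    integral_nonneg fun z => mul_nonneg (hKnonneg _) (hρnn z)
  have hfnn : ∀ x, 0 ≤ f x := by
    intro x
    simp only [hf]
    split
    · exact le_refl 0
    · exact div_nonneg (mul_nonneg (hKnonneg _) (hρnn x)) (hgnn x)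
  by_cases hfint : Integrable f
  swap
  · rw [integral_undef hfint]
    exact (mul_pos hcardpos (div_pos hMpos hmpos)).le
  -- the comparison functions
  set I : EuclideanSpace ℝ (Fin d) → ℝ := fun c => ∫ z in ball (c + y) (R₁ / 2), ρ z with hI
  have hInn : ∀ c, 0 ≤ I c := fun c =>
    setIntegral_nonneg measurableSet_ball fun z _ => hρnn z
  set h : EuclideanSpace ℝ (Fin d) → EuclideanSpace ℝ (Fin d) → ℝ := fun c =>
    (ball (c + y) (R₁ / 2)).indicator (fun x => (M / m) * (ρ x / I c)) with hh
  have hhnn : ∀ c x, 0 ≤ h c x := by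
    intro c x
    simp only [hh]
    exact indicator_nonneg (fun z _ =>
      mul_nonneg (div_nonneg hMpos.le hmpos.le) (div_nonneg (hρnn z) (hInn c))) x
  have hhint : ∀ c, Integrable (h c) := by
    intro c
    exact ((hρint.div_const (I c)).const_mul (M / m)).indicator measurableSet_ball
  have hhintegral : ∀ c, ∫ x, h c x ≤ M / m := by
    intro c
    rw [hh]
    simp only
    rw [integral_indicator measurableSet_ball, integral_const_mul]
    have : ∫ x in ball (c + y) (R₁ / 2), ρ x / I c = I c / I c := by
      rw [integral_div]
    rw [this]
    calc (M / m) * (I c / I c) ≤ (M / m) * 1 := by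
          have := div_self_le_one (I c)
          nlinarith [div_pos hMpos hmpos]
      _ = M / m := mul_one _
  -- a.e. vanishing of ρ on balls with zero mass
  have hae : ∀ᵐ x, ∀ c ∈ t, I c = 0 → x ∈ ball (c + y) (R₁ / 2) → ρ x = 0 := by
    rw [Filter.eventually_all_finset]
    intro c _
    by_cases hIc : I c = 0
    · have h0 : ρ =ᵐ[volume.restrict (ball (c + y) (R₁ / 2))] 0 := by
        rw [← setIntegral_eq_zero_iff_of_nonneg_ae
          (Filter.Eventually.of_forall fun z => hρnn z) (hρint.integrableOn)]
        exact hIc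
      have := (ae_restrict_iff' measurableSet_ball).1 h0
      filter_upwards [this] with x hx hIc' hxball
      exact hx hxball
    · filter_upwards with x hc hIc'
      exact absurd hc hIc
  -- pointwise bound  f ≤ ∑ c in t, h c  a.e.
  have hbound : ∀ᵐ x, f x ≤ ∑ c ∈ t, h c x := by
    filter_upwards [hae] with x hx
    by_cases hρx : ρ x = 0
    · simp only [hf, if_pos hρx]
      exact Finset.sum_nonneg fun c _ => hhnn c x
    by_cases hxy : R₂ ≤ ‖x - y‖
    · simp only [hf, if_neg hρx, hKzero _ hxy, zero_mul, zero_div]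
      exact Finset.sum_nonneg fun c _ => hhnn c x
    push_neg at hxy
    -- x - y is in the covered ball; pick a covering ball
    have hxmem : x - y ∈ closedBall (0 : EuclideanSpace ℝ (Fin d)) R₂ := by
      simpa [mem_closedBall, dist_eq_norm] using hxy.le
    rcases mem_iUnion₂.1 (ht hxmem) with ⟨c, hct, hcball⟩
    have hxball : x ∈ ball (c + y) (R₁ / 2) := by
      rw [mem_ball, dist_eq_norm] at hcball ⊢
      have : x - (c + y) = x - y - c := by abel
      rw [this]
      exact hcball
    have hIc : I c ≠ 0 := fun hIc0 => hρx (hx c hct hIc0 hxball)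
    have hIcpos : 0 < I c := lt_of_le_of_ne (hInn c) (Ne.symm hIc)
    -- lower bound for g x
    have hKρint : Integrable (fun z => K (x - z) * ρ z) := by
      refine hρint.bdd_mul ((hKcont.comp (continuous_const.sub continuous_id)).aestronglyMeasurable) (c := M) (Filter.Eventually.of_forall fun z => ?_)
      rw [Real.norm_eq_abs, abs_of_nonneg (hKnonneg _)]
      exact hxM _
    have hg1 : m * I c ≤ g x := by
      have step1 : ∫ z in ball (c + y) (R₁ / 2), m * ρ z ≤
          ∫ z in ball (c + y) (R₁ / 2), K (x - z) * ρ z := by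
        refine setIntegral_mono_on ((hρint.const_mul m).integrableOn)
          (hKρint.integrableOn) measurableSet_ball ?_
        intro z hz
        refine mul_le_mul_of_nonneg_right ?_ (hρnn z)
        refine hmle _ ?_
        rw [mem_ball, dist_eq_norm] at hz hxball
        calc ‖x - z‖ = ‖(x - (c + y)) + ((c + y) - z)‖ := by rw [sub_add_sub_cancel]
          _ ≤ ‖x - (c + y)‖ + ‖(c + y) - z‖ := norm_add_le _ _
          _ ≤ R₁ / 2 + R₁ / 2 :=
              add_le_add hxball.le (by rw [norm_sub_rev]; exact hz.le)
          _ = R₁ := by ring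
      have step2 : ∫ z in ball (c + y) (R₁ / 2), K (x - z) * ρ z ≤ g x :=
        setIntegral_le_integral hKρint
          (Filter.Eventually.of_forall fun z => mul_nonneg (hKnonneg _) (hρnn z))
      calc m * I c = ∫ z in ball (c + y) (R₁ / 2), m * ρ z := by
            rw [hI]; simp only; rw [integral_const_mul]
        _ ≤ g x := step1.trans step2
    have hgpos : 0 < g x := lt_of_lt_of_le (by positivity) hg1
    -- conclude
    have hfx : f x ≤ h c x := by
      simp only [hf, if_neg hρx, hh, indicator_of_mem hxball]
      have h1 : K (x - y) * ρ x ≤ M * ρ x :=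
        mul_le_mul_of_nonneg_right (hxM _) (hρnn x)
      calc K (x - y) * ρ x / g x ≤ M * ρ x / (m * I c) := by
            exact div_le_div₀ (mul_nonneg hMpos.le (hρnn x)) h1 (mul_pos hmpos hIcpos) hg1
        _ = (M / m) * (ρ x / I c) := (div_mul_div_comm M m (ρ x) (I c)).symm
    calc f x ≤ h c x := hfx
      _ ≤ ∑ c ∈ t, h c x :=
          Finset.single_le_sum (fun c _ => hhnn c x) hct
  -- sum up
  have hsumint : Integrable (fun x => ∑ c ∈ t, h c x) :=
    integrable_finset_sum t fun c _ => hhint c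
  calc ∫ x, f x ≤ ∫ x, ∑ c ∈ t, h c x := integral_mono_ae hfint hsumint hbound
    _ = ∑ c ∈ t, ∫ x, h c x := integral_finset_sum t fun c _ => hhint c
    _ ≤ ∑ _c ∈ t, M / m := Finset.sum_le_sum fun c _ => hhintegral c
    _ = t.card * (M / m) := by rw [Finset.sum_const, nsmul_eq_mul]
end

section
/- Let K : ℝ^d → ℝ be continuous, nonnegative, compactly supported with K(0) > 0 and ∫ K = 1, and for r > 0 set K^r(x) = r^{−d} K(x/r). Then there exists a constant C > 0 independent of r such that for every nonnegative ρ ∈ L¹(ℝ^d) and every y ∈ ℝ^d, ∫_{ℝ^d} K^r(x−y) · ρ(x)/(∫_{ℝ^d} K^r(x−z) ρ(z) dz) dx ≤ C. -/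
open MeasureTheory Metric Set

set_option maxHeartbeats 1000000

/-- Uniform-in-`r` kernel normalization bound for rescaled kernels
`K^r(x) = r^{-d} K(x/r)`. -/
theorem kernel_normalization_bound_rescaled
    (d : ℕ) (hd : 0 < d)
    (K : EuclideanSpace ℝ (Fin d) → ℝ)
    (hKcont : Continuous K) (hKnonneg : ∀ x, 0 ≤ K x)
    (hKsupp : HasCompactSupport K)
    (hK0 : 0 < K 0) (hKint : ∫ x, K x = 1) :
    ∃ C : ℝ, 0 < C ∧
      ∀ r : ℝ, 0 < r →
      ∀ ρ : EuclideanSpace ℝ (Fin d) → ℝ,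
        Integrable ρ → (∀ x, 0 ≤ ρ x) →
        ∀ y : EuclideanSpace ℝ (Fin d),
          (∫ x, if ρ x = 0 then 0
                else (r⁻¹ ^ d * K (r⁻¹ • (x - y))) * ρ x /
                  ∫ z, (r⁻¹ ^ d * K (r⁻¹ • (x - z))) * ρ z) ≤ C := by
  classical
  -- upper bound for K
  obtain ⟨M, hM⟩ : ∃ M, ∀ x, ‖K x‖ ≤ M := hKcont.bounded_above_of_compact_support hKsupp
  have hMK : ∀ x, K x ≤ M := fun x => (le_abs_self _).trans (hM x)
  have hM0 : 0 < M := lt_of_lt_of_le hK0 (hMK 0)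
  -- lower bound near 0
  set c : ℝ := K 0 / 2 with hc
  have hc0 : 0 < c := by positivity
  obtain ⟨δ₀, hδ₀, hδball⟩ : ∃ δ > 0, ∀ u, dist u 0 < δ → dist (K u) (K 0) < K 0 / 2 :=
    Metric.continuousAt_iff.mp (hKcont.continuousAt (x := 0)) (K 0 / 2) (by positivity)
  set δ : ℝ := δ₀ / 2 with hδdef
  have hδ : 0 < δ := by positivity
  have hKc : ∀ u : EuclideanSpace ℝ (Fin d), ‖u‖ ≤ δ → c ≤ K u := by
    intro u hu
    have h1 : dist u 0 < δ₀ := by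
      rw [dist_zero_right]; simp only [hδdef] at hu; linarith
    have h2' := hδball u h1
    rw [Real.dist_eq] at h2'
    have h2 := abs_lt.mp h2'
    simp only [hc]; linarith [h2.1]
  -- support radius
  obtain ⟨R, hR⟩ : ∃ R, tsupport K ⊆ closedBall 0 R :=
    hKsupp.isBounded.subset_closedBall 0
  -- finite cover of closedBall 0 R by balls of radius δ/2
  obtain ⟨t, ht⟩ : ∃ t : Finset (EuclideanSpace ℝ (Fin d)),
      closedBall (0 : EuclideanSpace ℝ (Fin d)) R ⊆ ⋃ p ∈ t, ball p (δ / 2) := by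
    have hcomp : IsCompact (closedBall (0 : EuclideanSpace ℝ (Fin d)) R) :=
      isCompact_closedBall 0 R
    obtain ⟨t, ht⟩ := hcomp.elim_finite_subcover (fun p : EuclideanSpace ℝ (Fin d) => ball p (δ / 2))
      (fun p => isOpen_ball) (fun x _ => mem_iUnion.2 ⟨x, mem_ball_self (by positivity)⟩)
    exact ⟨t, ht⟩
  refine ⟨t.card * (M / c) + 1, by positivity, ?_⟩
  intro r hr ρ hρ hρ0 y
  have hrne : r ≠ 0 := ne_of_gt hr
  have hrinv : (0:ℝ) < r⁻¹ ^ d := by positivity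
  -- notation
  set B : EuclideanSpace ℝ (Fin d) → Set (EuclideanSpace ℝ (Fin d)) :=
    fun p => closedBall (y + r • p) (δ * r / 2) with hB
  set I : EuclideanSpace ℝ (Fin d) → ℝ := fun p => ∫ z in B p, ρ z with hI
  set D : EuclideanSpace ℝ (Fin d) → ℝ :=
    fun x => ∫ z, (r⁻¹ ^ d * K (r⁻¹ • (x - z))) * ρ z with hD
  set f : EuclideanSpace ℝ (Fin d) → ℝ :=
    fun x => if ρ x = 0 then 0
      else (r⁻¹ ^ d * K (r⁻¹ • (x - y))) * ρ x / D x with hf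
  have hInonneg : ∀ p, 0 ≤ I p := fun p =>
    setIntegral_nonneg measurableSet_closedBall (fun z _ => hρ0 z)
  have hDnonneg : ∀ x, 0 ≤ D x := fun x =>
    integral_nonneg (fun z => mul_nonneg (mul_nonneg hrinv.le (hKnonneg _)) (hρ0 z))
  have hfnonneg : ∀ x, 0 ≤ f x := by
    intro x
    simp only [hf]
    split
    · exact le_refl 0
    · exact div_nonneg (mul_nonneg (mul_nonneg hrinv.le (hKnonneg _)) (hρ0 x)) (hDnonneg x)
  -- integrability of the convolution integrand
  have hint : ∀ x, Integrable (fun z => (r⁻¹ ^ d * K (r⁻¹ • (x - z))) * ρ z) := by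
    intro x
    refine Integrable.bdd_mul (c := r⁻¹ ^ d * M) hρ ?_ (Filter.Eventually.of_forall fun z => ?_)
    · exact (continuous_const.mul (hKcont.comp ((continuous_const.sub continuous_id).const_smul
        r⁻¹))).aestronglyMeasurable
    · rw [Real.norm_eq_abs, abs_mul, abs_of_pos hrinv, abs_of_nonneg (hKnonneg _)]
      exact mul_le_mul_of_nonneg_left (hMK _) hrinv.le
  -- lower bound on the denominator
  have hDlow : ∀ p, ∀ x ∈ B p, (c * r⁻¹ ^ d) * I p ≤ D x := by
    intro p x hx
    have h1 : ∫ z in B p, (r⁻¹ ^ d * K (r⁻¹ • (x - z))) * ρ z ≤ D x := by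
      refine setIntegral_le_integral (hint x) (Filter.Eventually.of_forall fun z => ?_)
      exact mul_nonneg (mul_nonneg hrinv.le (hKnonneg _)) (hρ0 z)
    have h2 : ∫ z in B p, (c * r⁻¹ ^ d) * ρ z ≤
        ∫ z in B p, (r⁻¹ ^ d * K (r⁻¹ • (x - z))) * ρ z := by
      refine setIntegral_mono_on ((hρ.const_mul _).integrableOn)
        ((hint x).integrableOn) measurableSet_closedBall (fun z hz => ?_)
      have hdist : ‖r⁻¹ • (x - z)‖ ≤ δ := by
        rw [norm_smul, norm_inv, Real.norm_eq_abs, abs_of_pos hr]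
        have hxz : ‖x - z‖ ≤ δ * r := by
          have := dist_triangle x (y + r • p) z
          rw [dist_comm (y + r • p) z] at this
          have hx' : dist x (y + r • p) ≤ δ * r / 2 := mem_closedBall.mp hx
          have hz' : dist z (y + r • p) ≤ δ * r / 2 := mem_closedBall.mp hz
          rw [← dist_eq_norm]
          linarith
        have h5 : r⁻¹ * ‖x - z‖ ≤ r⁻¹ * (δ * r) :=
          mul_le_mul_of_nonneg_left hxz (by positivity)
        have h6 : r⁻¹ * (δ * r) = δ := by field_simp
        linarith
      have := hKc _ hdist
      have h3 : c * r⁻¹ ^ d ≤ r⁻¹ ^ d * K (r⁻¹ • (x - z)) := by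
        rw [mul_comm]
        exact mul_le_mul_of_nonneg_left this hrinv.le
      exact mul_le_mul_of_nonneg_right h3 (hρ0 z)
    calc (c * r⁻¹ ^ d) * I p = ∫ z in B p, (c * r⁻¹ ^ d) * ρ z := by
          rw [hI]; exact (integral_const_mul _ _).symm
      _ ≤ D x := le_trans h2 h1
  -- covering property
  have hcover : ∀ x, K (r⁻¹ • (x - y)) ≠ 0 → ∃ p ∈ t, x ∈ B p := by
    intro x hx
    have h1 : r⁻¹ • (x - y) ∈ tsupport K := subset_tsupport K hx
    have h2 : r⁻¹ • (x - y) ∈ ⋃ p ∈ t, ball p (δ / 2) := ht (hR h1)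
    simp only [mem_iUnion, exists_prop] at h2
    obtain ⟨p, hp, hball⟩ := h2
    refine ⟨p, hp, ?_⟩
    have : x - (y + r • p) = r • (r⁻¹ • (x - y) - p) := by
      rw [smul_sub, smul_smul, mul_inv_cancel₀ hrne, one_smul]
      abel
    rw [mem_closedBall, dist_eq_norm, this, norm_smul, Real.norm_eq_abs, abs_of_pos hr]
    have hb : ‖r⁻¹ • (x - y) - p‖ < δ / 2 := by
      rw [← dist_eq_norm]; exact mem_ball.mp hball
    calc r * ‖r⁻¹ • (x - y) - p‖ ≤ r * (δ / 2) :=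
          mul_le_mul_of_nonneg_left hb.le hr.le
      _ = δ * r / 2 := by ring
  -- a.e. vanishing on balls with zero mass
  have hzero : ∀ᵐ x, ∀ p ∈ t, I p = 0 → x ∈ B p → ρ x = 0 := by
    rw [Filter.eventually_all_finset]
    intro p hp
    by_cases hIp : I p = 0
    · have hres : ρ =ᵐ[volume.restrict (B p)] 0 := by
        have hi : IntegrableOn ρ (B p) := hρ.integrableOn
        have := (integral_eq_zero_iff_of_nonneg_ae
          (Filter.Eventually.of_forall fun z => hρ0 z : 0 ≤ᵐ[volume.restrict (B p)] ρ) hi).mp hIp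
        exact this
      have := (ae_restrict_iff' measurableSet_closedBall).mp hres
      filter_upwards [this] with x hx _ hxB
      exact hx hxB
    · exact Filter.Eventually.of_forall fun x h _ => absurd h hIp
  -- pointwise a.e. bound by indicator sum
  have hpt : ∀ᵐ x, ENNReal.ofReal (f x) ≤
      ∑ p ∈ t, (B p).indicator (fun x => ENNReal.ofReal ((M / c) / I p * ρ x)) x := by
    filter_upwards [hzero] with x hx
    by_cases hfx : f x = 0
    · rw [hfx]; simp
    · have hρx : ρ x ≠ 0 := by
        intro h; apply hfx; simp [hf, h]
      have hfx' : f x = (r⁻¹ ^ d * K (r⁻¹ • (x - y))) * ρ x / D x := by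
        simp [hf, hρx]
      have hKxy : K (r⁻¹ • (x - y)) ≠ 0 := by
        intro h
        apply hfx
        rw [hfx', h]
        simp
      obtain ⟨p, hp, hxB⟩ := hcover x hKxy
      have hIp : I p ≠ 0 := by
        intro h
        exact hρx (hx p hp h hxB)
      have hIp' : 0 < I p := lt_of_le_of_ne (hInonneg p) (Ne.symm hIp)
      have key : f x ≤ (M / c) / I p * ρ x := by
        rw [hfx']
        have hDl : (c * r⁻¹ ^ d) * I p ≤ D x := hDlow p x hxB
        have hDl0 : 0 < (c * r⁻¹ ^ d) * I p := by positivity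
        have hN : (r⁻¹ ^ d * K (r⁻¹ • (x - y))) * ρ x ≤ (r⁻¹ ^ d * M) * ρ x := by
          refine mul_le_mul_of_nonneg_right ?_ (hρ0 x)
          exact mul_le_mul_of_nonneg_left (hMK _) hrinv.le
        calc (r⁻¹ ^ d * K (r⁻¹ • (x - y))) * ρ x / D x
            ≤ ((r⁻¹ ^ d * M) * ρ x) / ((c * r⁻¹ ^ d) * I p) := by
              exact div_le_div₀ (mul_nonneg (by positivity) (hρ0 x)) hN hDl0 hDl
          _ = (M / c) / I p * ρ x := by
              field_simp
      calc ENNReal.ofReal (f x) ≤ ENNReal.ofReal ((M / c) / I p * ρ x) :=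
            ENNReal.ofReal_le_ofReal key
        _ = (B p).indicator (fun x => ENNReal.ofReal ((M / c) / I p * ρ x)) x := by
            rw [Set.indicator_of_mem hxB]
        _ ≤ ∑ q ∈ t, (B q).indicator (fun x => ENNReal.ofReal ((M / c) / I q * ρ x)) x :=
            Finset.single_le_sum
              (f := fun q => (B q).indicator (fun x => ENNReal.ofReal ((M / c) / I q * ρ x)) x)
              (fun q _ => zero_le) hp
  -- bound the lintegral
  have hlint : ∫⁻ x, ENNReal.ofReal (f x) ≤ ENNReal.ofReal (t.card * (M / c)) := by
    calc ∫⁻ x, ENNReal.ofReal (f x)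
        ≤ ∫⁻ x, ∑ p ∈ t, (B p).indicator (fun x => ENNReal.ofReal ((M / c) / I p * ρ x)) x :=
          lintegral_mono_ae hpt
      _ = ∑ p ∈ t, ∫⁻ x, (B p).indicator (fun x => ENNReal.ofReal ((M / c) / I p * ρ x)) x := by
          refine lintegral_finset_sum' t (fun p _ => ?_)
          exact (AEMeasurable.indicator
            ((ENNReal.measurable_ofReal.comp_aemeasurable
              (hρ.aemeasurable.const_mul _))) measurableSet_closedBall)
      _ ≤ ∑ p ∈ t, ENNReal.ofReal (M / c) := by
          refine Finset.sum_le_sum (fun p _ => ?_)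
          rw [lintegral_indicator measurableSet_closedBall]
          have hconst : ∀ x, ENNReal.ofReal ((M / c) / I p * ρ x) =
              ENNReal.ofReal ((M / c) / I p) * ENNReal.ofReal (ρ x) := by
            intro x
            rw [ENNReal.ofReal_mul (div_nonneg (by positivity) (hInonneg p))]
          simp_rw [hconst]
          rw [lintegral_const_mul' _ _ ENNReal.ofReal_ne_top]
          have hIeq : ∫⁻ x in B p, ENNReal.ofReal (ρ x) = ENNReal.ofReal (I p) := by
            rw [hI]
            exact (ofReal_integral_eq_lintegral_ofReal hρ.integrableOn
              (Filter.Eventually.of_forall fun z => hρ0 z)).symm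
          rw [hIeq, ← ENNReal.ofReal_mul (div_nonneg (by positivity) (hInonneg p))]
          apply ENNReal.ofReal_le_ofReal
          by_cases hIp : I p = 0
          · rw [hIp, div_zero, zero_mul]; exact div_nonneg hM0.le hc0.le
          · have : 0 < I p := lt_of_le_of_ne (hInonneg p) (Ne.symm hIp)
            rw [div_mul_cancel₀ _ (ne_of_gt this)]
      _ = t.card * ENNReal.ofReal (M / c) := by
          rw [Finset.sum_const, nsmul_eq_mul]
      _ = ENNReal.ofReal (t.card * (M / c)) := by
          rw [ENNReal.ofReal_mul (by positivity)]
          congr 1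
          rw [ENNReal.ofReal_natCast]
  -- conclude
  by_cases hfi : Integrable f
  · have heq : ∫ x, f x = (∫⁻ x, ENNReal.ofReal (f x)).toReal :=
      integral_eq_lintegral_of_nonneg_ae (Filter.Eventually.of_forall hfnonneg)
        hfi.aestronglyMeasurable
    have : (∫ x, f x) ≤ t.card * (M / c) := by
      rw [heq]
      refine ENNReal.toReal_le_of_le_ofReal
        (mul_nonneg (Nat.cast_nonneg _) (div_nonneg hM0.le hc0.le)) hlint
    calc (∫ x, f x) ≤ t.card * (M / c) := this
      _ ≤ t.card * (M / c) + 1 := by linarith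
  · rw [integral_undef hfi]
    have h9 : (0:ℝ) ≤ (t.card : ℝ) * (M / c) :=
      mul_nonneg (Nat.cast_nonneg _) (div_nonneg hM0.le hc0.le)
    linarith
end

section
/- Under the hypotheses of the kernel normalization lemma (K nonnegative continuous, K > 0 on B_{R₁}, K = 0 outside B_{R₂}), for any nonnegative f(x,v) with ρ(x) = ∫ f(x,v) dv, ρ̃(x) = (K ⋆ ρ)(x), and ũ(x) = (∫∫ K(x−y) v f(y,v) dv dy)/ρ̃(x), one has ∫_{ℝ^d} ρ(x) ũ(x)² dx ≤ C ∫∫ |v|² f(y,v) dv dy, where C is the constant from the kernel normalization lemma. -/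
open MeasureTheory

open ENNReal Metric


lemma weighted_cs {α : Type*} [MeasurableSpace α] {μ : Measure α}
    (g h : α → ℝ) (hg0 : ∀ z, 0 ≤ g z) (hh0 : ∀ z, 0 ≤ h z)
    (hgm : AEMeasurable g μ) (hhm : AEMeasurable h μ)
    (hg : Integrable g μ) (hgh : Integrable (fun z => g z * h z) μ)
    (hgh2 : Integrable (fun z => g z * h z ^ 2) μ) :
    (∫ z, g z * h z ∂μ) ^ 2 ≤ (∫ z, g z ∂μ) * ∫ z, g z * h z ^ 2 ∂μ := by
  set G : α → ℝ≥0∞ := fun z => ENNReal.ofReal (g z) with hG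
  set H : α → ℝ≥0∞ := fun z => ENNReal.ofReal (h z) with hH
  have hGm : AEMeasurable G μ := hgm.ennreal_ofReal
  have hHm : AEMeasurable H μ := hhm.ennreal_ofReal
  have key : (∫⁻ z, G z * H z ∂μ) ^ 2 ≤ (∫⁻ z, G z ∂μ) * ∫⁻ z, G z * H z ^ 2 ∂μ := by
    have hpq : Real.HolderConjugate 2 2 := Real.HolderConjugate.two_two
    have H2 := ENNReal.lintegral_mul_le_Lp_mul_Lq μ hpq
      (f := fun z => (G z) ^ ((2:ℝ)⁻¹)) (g := fun z => (G z) ^ ((2:ℝ)⁻¹) * H z)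
      (hGm.pow_const _) ((hGm.pow_const _).mul hHm)
    have e1 : ∀ z : α, ((fun z => (G z) ^ ((2:ℝ)⁻¹)) * fun z => (G z) ^ ((2:ℝ)⁻¹) * H z) z
        = G z * H z := by
      intro z
      simp only [Pi.mul_apply]
      rw [← mul_assoc, ← ENNReal.rpow_add_of_nonneg _ _ (by norm_num) (by norm_num)]
      norm_num
    have e2 : ∀ z : α, ((fun z => (G z) ^ ((2:ℝ)⁻¹)) z) ^ (2:ℝ) = G z := by
      intro z; simp only []
      rw [← ENNReal.rpow_mul]; norm_num
    have e3 : ∀ z : α, ((fun z => (G z) ^ ((2:ℝ)⁻¹) * H z) z) ^ (2:ℝ) = G z * H z ^ 2 := by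
      intro z; simp only []
      rw [ENNReal.mul_rpow_of_nonneg _ _ (by norm_num), ← ENNReal.rpow_mul]
      norm_num
    simp only [e1, e2, e3] at H2
    calc (∫⁻ z, G z * H z ∂μ) ^ 2
        ≤ ((∫⁻ z, G z ∂μ) ^ ((2:ℝ)⁻¹) * (∫⁻ z, G z * H z ^ 2 ∂μ) ^ ((2:ℝ)⁻¹)) ^ 2 := by
          apply pow_le_pow_left' (by simpa using H2)
      _ = (∫⁻ z, G z ∂μ) * ∫⁻ z, G z * H z ^ 2 ∂μ := by
          rw [mul_pow, ← ENNReal.rpow_natCast ((∫⁻ z, G z ∂μ) ^ ((2:ℝ)⁻¹)) 2,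
            ← ENNReal.rpow_natCast ((∫⁻ z, G z * H z ^ 2 ∂μ) ^ ((2:ℝ)⁻¹)) 2,
            ← ENNReal.rpow_mul, ← ENNReal.rpow_mul]
          norm_num
  -- convert to real integrals
  have c1 : ENNReal.ofReal (∫ z, g z * h z ∂μ) = ∫⁻ z, G z * H z ∂μ := by
    rw [ofReal_integral_eq_lintegral_ofReal hgh
      (Filter.Eventually.of_forall fun z => mul_nonneg (hg0 z) (hh0 z))]
    congr 1; ext z; rw [ENNReal.ofReal_mul (hg0 z)]
  have c2 : ENNReal.ofReal (∫ z, g z ∂μ) = ∫⁻ z, G z ∂μ :=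
    ofReal_integral_eq_lintegral_ofReal hg (Filter.Eventually.of_forall hg0)
  have c3 : ENNReal.ofReal (∫ z, g z * h z ^ 2 ∂μ) = ∫⁻ z, G z * H z ^ 2 ∂μ := by
    rw [ofReal_integral_eq_lintegral_ofReal hgh2
      (Filter.Eventually.of_forall fun z => mul_nonneg (hg0 z) (sq_nonneg _))]
    congr 1; ext z
    rw [ENNReal.ofReal_mul (hg0 z), sq, sq, ENNReal.ofReal_mul (hh0 z)]
  have key' : ENNReal.ofReal ((∫ z, g z * h z ∂μ) ^ 2)
      ≤ ENNReal.ofReal ((∫ z, g z ∂μ) * ∫ z, g z * h z ^ 2 ∂μ) := by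
    rw [ENNReal.ofReal_pow (integral_nonneg fun z => mul_nonneg (hg0 z) (hh0 z)), c1,
      ENNReal.ofReal_mul (integral_nonneg hg0), c2, c3]
    exact key
  exact (ENNReal.ofReal_le_ofReal_iff (mul_nonneg (integral_nonneg hg0)
    (integral_nonneg fun z => mul_nonneg (hg0 z) (sq_nonneg _)))).mp key'

lemma vec_cs {α : Type*} [MeasurableSpace α] {μ : Measure α}
    {E : Type*} [NormedAddCommGroup E] [NormedSpace ℝ E]
    (g : α → ℝ) (v : α → E) (hg0 : ∀ z, 0 ≤ g z)
    (hgm : AEMeasurable g μ) (hvm : AEStronglyMeasurable v μ)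
    (hg : Integrable g μ) (hgv : Integrable (fun z => g z * ‖v z‖) μ)
    (hgv2 : Integrable (fun z => g z * ‖v z‖ ^ 2) μ) :
    ‖∫ z, g z • v z ∂μ‖ ^ 2 ≤ (∫ z, g z ∂μ) * ∫ z, g z * ‖v z‖ ^ 2 ∂μ := by
  have h1 : ‖∫ z, g z • v z ∂μ‖ ≤ ∫ z, g z * ‖v z‖ ∂μ := by
    refine (norm_integral_le_integral_norm _).trans (le_of_eq ?_)
    congr 1; ext z; rw [norm_smul, Real.norm_of_nonneg (hg0 z)]
  calc ‖∫ z, g z • v z ∂μ‖ ^ 2 ≤ (∫ z, g z * ‖v z‖ ∂μ) ^ 2 := by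
        apply pow_le_pow_left₀ (norm_nonneg _) h1
    _ ≤ (∫ z, g z ∂μ) * ∫ z, g z * ‖v z‖ ^ 2 ∂μ :=
        weighted_cs g (fun z => ‖v z‖) hg0 (fun z => norm_nonneg _) hgm hvm.norm.aemeasurable hg hgv hgv2

lemma kernel_bound (d : ℕ) (K : EuclideanSpace ℝ (Fin d) → ℝ)
    (hKcont : Continuous K) (hKnonneg : ∀ x, 0 ≤ K x)
    (R₁ R₂ : ℝ) (hR₁ : 0 < R₁) (hR₁₂ : R₁ < R₂)
    (hKpos : ∀ x, ‖x‖ ≤ R₁ → 0 < K x)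
    (hKzero : ∀ x, R₂ ≤ ‖x‖ → K x = 0) :
    ∃ C : ℝ, 0 < C ∧
      ∀ ρ : EuclideanSpace ℝ (Fin d) → ℝ, Measurable ρ → (∀ x, 0 ≤ ρ x) → Integrable ρ →
        ∀ y : EuclideanSpace ℝ (Fin d),
          ∫⁻ x, ENNReal.ofReal (K (x - y)) *
            ENNReal.ofReal (ρ x * (∫ x', K (x - x') * ρ x')⁻¹) ≤ ENNReal.ofReal C := by
  have hR₂ : 0 < R₂ := hR₁.trans hR₁₂
  -- minimum of K on closedBall 0 R₁
  obtain ⟨w, hw, hwmin⟩ := (isCompact_closedBall (0:EuclideanSpace ℝ (Fin d)) R₁).exists_isMinOn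
    ⟨0, by simp [hR₁.le]⟩ hKcont.continuousOn
  set κ := K w with hκdef
  have hκpos : 0 < κ := hKpos w (by simpa [dist_eq_norm] using mem_closedBall_iff_norm.mp hw)
  have hκle : ∀ x : EuclideanSpace ℝ (Fin d), ‖x‖ ≤ R₁ → κ ≤ K x := by
    intro x hx
    exact hwmin (by simpa [mem_closedBall_iff_norm] using hx)
  -- maximum of K
  obtain ⟨w₂, hw₂, hwmax⟩ := (isCompact_closedBall (0:EuclideanSpace ℝ (Fin d)) R₂).exists_isMaxOn
    ⟨0, by simp [hR₂.le]⟩ hKcont.continuousOn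
  set M := K w₂ with hMdef
  have hM0 : 0 < M := lt_of_lt_of_le (hKpos 0 (by simp [hR₁.le]))
    (hwmax (by simp [mem_closedBall_iff_norm, hR₂.le]))
  have hMle : ∀ x : EuclideanSpace ℝ (Fin d), K x ≤ M := by
    intro x
    by_cases hx : ‖x‖ ≤ R₂
    · exact hwmax (by simpa [mem_closedBall_iff_norm] using hx)
    · rw [hKzero x (le_of_not_ge hx)]; exact hM0.le
  -- finite covering of closedBall 0 R₂ by balls of radius R₁/2
  obtain ⟨s, hs⟩ := (isCompact_closedBall (0:EuclideanSpace ℝ (Fin d)) R₂).elim_finite_subcover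
    (fun c : EuclideanSpace ℝ (Fin d) => ball c (R₁/2)) (fun c => isOpen_ball)
    (fun x hx => Set.mem_iUnion.mpr ⟨x, mem_ball_self (by linarith)⟩)
  refine ⟨s.card * M / κ + 1, by positivity, ?_⟩
  intro ρ hρm hρ0 hρint y
  set rt : EuclideanSpace ℝ (Fin d) → ℝ := fun x => ∫ x', K (x - x') * ρ x' with hrtdef
  have hrtm : Measurable rt := by
    have hF : StronglyMeasurable fun p : EuclideanSpace ℝ (Fin d) × EuclideanSpace ℝ (Fin d) => K (p.1 - p.2) * ρ p.2 :=
      ((hKcont.measurable.comp (measurable_fst.sub measurable_snd)).mul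
        (hρm.comp measurable_snd)).stronglyMeasurable
    exact hF.integral_prod_right'.measurable
  set r : EuclideanSpace ℝ (Fin d) → ℝ := fun x => ρ x * (rt x)⁻¹ with hrdef
  have hrm : Measurable r := hρm.mul hrtm.inv
  have hr0 : ∀ x, 0 ≤ r x := fun x => mul_nonneg (hρ0 x)
    (inv_nonneg.mpr (integral_nonneg fun x' => mul_nonneg (hKnonneg _) (hρ0 x')))
  -- per-ball bound
  have ball_bound : ∀ b : EuclideanSpace ℝ (Fin d), ∫⁻ x in ball b (R₁/2), ENNReal.ofReal (r x)
      ≤ ENNReal.ofReal (1/κ) := by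
    intro b
    set B := ball b (R₁/2) with hBdef
    set A := ∫ x in B, ρ x with hAdef
    have hA0 : 0 ≤ A := setIntegral_nonneg measurableSet_ball
      (fun x _ => hρ0 x)
    rcases eq_or_lt_of_le hA0 with hA | hA
    · -- A = 0 : ρ vanishes a.e. on B
      have hz : ρ =ᵐ[volume.restrict B] 0 :=
        (setIntegral_eq_zero_iff_of_nonneg_ae
          (Filter.Eventually.of_forall fun x => hρ0 x) hρint.integrableOn).mp hA.symm
      have : (fun x => ENNReal.ofReal (r x)) =ᵐ[volume.restrict B] 0 := by
        filter_upwards [hz] with x hx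
        simp [hrdef, hx]
      rw [lintegral_congr_ae this]
      simp
    · -- A > 0 : rt ≥ κ * A on B
      have hrtB : ∀ x ∈ B, κ * A ≤ rt x := by
        intro x hx
        have hint : Integrable (fun x' => K (x - x') * ρ x') := by
          refine (hρint.const_mul M).mono ?_ ?_
          · exact ((hKcont.measurable.comp (measurable_const.sub measurable_id)).mul
              hρm).aestronglyMeasurable
          · refine Filter.Eventually.of_forall fun x' => ?_
            rw [Real.norm_of_nonneg (mul_nonneg (hKnonneg _) (hρ0 _)), Real.norm_of_nonneg
              (mul_nonneg (hM0.le.trans (le_refl M)) (hρ0 _))]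
            exact mul_le_mul_of_nonneg_right (hMle _) (hρ0 _)
        have h1 : ∫ x' in B, K (x - x') * ρ x' ≤ rt x :=
          setIntegral_le_integral hint
            (Filter.Eventually.of_forall fun x' => mul_nonneg (hKnonneg _) (hρ0 _))
        have h2 : κ * A ≤ ∫ x' in B, K (x - x') * ρ x' := by
          rw [hAdef, ← integral_const_mul]
          refine setIntegral_mono_on (hρint.const_mul κ).integrableOn
            hint.integrableOn measurableSet_ball ?_
          intro x' hx'
          refine mul_le_mul_of_nonneg_right (hκle _ ?_) (hρ0 _)
          have := dist_triangle x b x'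
          rw [← dist_eq_norm]
          calc dist x x' ≤ dist x b + dist b x' := dist_triangle x b x'
            _ ≤ R₁/2 + R₁/2 := add_le_add (le_of_lt (mem_ball.mp hx))
                (le_of_lt (by rw [dist_comm]; exact mem_ball.mp hx'))
            _ = R₁ := by ring
        exact h2.trans h1
      have hκA : 0 < κ * A := mul_pos hκpos hA
      have hpt : ∀ x ∈ B, ENNReal.ofReal (r x) ≤ ENNReal.ofReal ((κ * A)⁻¹ * ρ x) := by
        intro x hx
        refine ENNReal.ofReal_le_ofReal ?_
        rw [mul_comm ((κ * A)⁻¹)]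
        exact mul_le_mul_of_nonneg_left (inv_anti₀ hκA (hrtB x hx)) (hρ0 x)
      calc ∫⁻ x in B, ENNReal.ofReal (r x)
          ≤ ∫⁻ x in B, ENNReal.ofReal ((κ * A)⁻¹ * ρ x) :=
            setLIntegral_mono ((measurable_const.mul hρm).ennreal_ofReal) hpt
        _ = ∫⁻ x in B, ENNReal.ofReal ((κ * A)⁻¹) * ENNReal.ofReal (ρ x) := by
            congr 1; ext x; rw [ENNReal.ofReal_mul (by positivity)]
        _ = ENNReal.ofReal ((κ * A)⁻¹) * ∫⁻ x in B, ENNReal.ofReal (ρ x) :=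
            lintegral_const_mul' _ _ ENNReal.ofReal_ne_top
        _ = ENNReal.ofReal ((κ * A)⁻¹) * ENNReal.ofReal A := by
            rw [ofReal_integral_eq_lintegral_ofReal hρint.integrableOn
              (Filter.Eventually.of_forall fun x => hρ0 x)]
        _ = ENNReal.ofReal ((κ * A)⁻¹ * A) := by
            rw [ENNReal.ofReal_mul (by positivity)]
        _ = ENNReal.ofReal (1/κ) := by
            congr 1
            field_simp
  -- main estimate
  have hpt : ∀ x : EuclideanSpace ℝ (Fin d),
      ENNReal.ofReal (K (x - y)) * ENNReal.ofReal (r x)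
        ≤ ∑ c ∈ s, (ball (y + c) (R₁/2)).indicator
            (fun x => ENNReal.ofReal M * ENNReal.ofReal (r x)) x := by
    intro x
    by_cases hK : K (x - y) = 0
    · simp [hK]
    · have hxy : ‖x - y‖ < R₂ := lt_of_not_ge fun hge => hK (hKzero _ hge)
      have hmem : x - y ∈ closedBall (0:EuclideanSpace ℝ (Fin d)) R₂ := by
        simpa [mem_closedBall_iff_norm] using hxy.le
      obtain ⟨c, hc, hbc⟩ := Set.mem_iUnion₂.mp (hs hmem)
      have hxball : x ∈ ball (y + c) (R₁/2) := by
        rw [mem_ball, dist_eq_norm]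
        have : x - (y + c) = x - y - c := by abel
        rw [this, ← dist_eq_norm]
        exact mem_ball.mp hbc
      calc ENNReal.ofReal (K (x - y)) * ENNReal.ofReal (r x)
          ≤ ENNReal.ofReal M * ENNReal.ofReal (r x) :=
            mul_le_mul_left (ENNReal.ofReal_le_ofReal (hMle _)) _
        _ = (ball (y + c) (R₁/2)).indicator
              (fun x => ENNReal.ofReal M * ENNReal.ofReal (r x)) x := by
            rw [Set.indicator_of_mem hxball]
        _ ≤ _ := Finset.single_le_sum (f := fun c =>
              (ball (y + c) (R₁/2)).indicator
                (fun x => ENNReal.ofReal M * ENNReal.ofReal (r x)) x)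
              (fun _ _ => bot_le) hc
  calc ∫⁻ x, ENNReal.ofReal (K (x - y)) * ENNReal.ofReal (r x)
      ≤ ∫⁻ x, ∑ c ∈ s, (ball (y + c) (R₁/2)).indicator
          (fun x => ENNReal.ofReal M * ENNReal.ofReal (r x)) x := lintegral_mono hpt
    _ = ∑ c ∈ s, ∫⁻ x, (ball (y + c) (R₁/2)).indicator
          (fun x => ENNReal.ofReal M * ENNReal.ofReal (r x)) x :=
        lintegral_finset_sum s (fun c _ =>
          ((measurable_const.mul hrm.ennreal_ofReal)).indicator measurableSet_ball)
    _ = ∑ c ∈ s, ∫⁻ x in ball (y + c) (R₁/2),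
          ENNReal.ofReal M * ENNReal.ofReal (r x) := by
        refine Finset.sum_congr rfl fun c _ => ?_
        rw [lintegral_indicator measurableSet_ball]
    _ = ∑ c ∈ s, ENNReal.ofReal M * ∫⁻ x in ball (y + c) (R₁/2), ENNReal.ofReal (r x) := by
        refine Finset.sum_congr rfl fun c _ => ?_
        rw [lintegral_const_mul' _ _ ENNReal.ofReal_ne_top]
    _ ≤ ∑ c ∈ s, ENNReal.ofReal M * ENNReal.ofReal (1/κ) :=
        Finset.sum_le_sum fun c _ => mul_le_mul_right (ball_bound _) _
    _ = ENNReal.ofReal (s.card * (M * (1/κ))) := by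
        rw [Finset.sum_const, nsmul_eq_mul, ENNReal.ofReal_mul (by positivity : (0:ℝ) ≤ (s.card:ℝ)),
          ENNReal.ofReal_natCast, ENNReal.ofReal_mul hM0.le]
    _ ≤ ENNReal.ofReal (s.card * M / κ + 1) := by
        apply ENNReal.ofReal_le_ofReal
        have : (s.card : ℝ) * (M * (1/κ)) = s.card * M / κ := by ring
        rw [this]
        linarith

/-- Control of the local alignment energy `∫ ρ ũ² dx` by the kinetic energy,
with a constant coming from the kernel normalization lemma. -/
theorem alignment_energy_bound
    (d : ℕ) (hd : 0 < d)
    (K : EuclideanSpace ℝ (Fin d) → ℝ)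
    (hKcont : Continuous K) (hKnonneg : ∀ x, 0 ≤ K x)
    (R₁ R₂ : ℝ) (hR₁ : 0 < R₁) (hR₁₂ : R₁ < R₂)
    (hKpos : ∀ x, ‖x‖ ≤ R₁ → 0 < K x)
    (hKzero : ∀ x, R₂ ≤ ‖x‖ → K x = 0) :
    ∃ C : ℝ, 0 < C ∧
      ∀ f : EuclideanSpace ℝ (Fin d) × EuclideanSpace ℝ (Fin d) → ℝ,
        Measurable f → (∀ z, 0 ≤ f z) → Integrable f →
        Integrable (fun z => ‖z.2‖ ^ 2 * f z) →
        (∫ x, (∫ v, f (x, v)) *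
            ‖((∫ z : EuclideanSpace ℝ (Fin d) × EuclideanSpace ℝ (Fin d),
                K (x - z.1) * f z)⁻¹ : ℝ) •
              (∫ z : EuclideanSpace ℝ (Fin d) × EuclideanSpace ℝ (Fin d),
                (K (x - z.1) * f z) • z.2)‖ ^ 2) ≤
          C * ∫ z : EuclideanSpace ℝ (Fin d) × EuclideanSpace ℝ (Fin d),
                ‖z.2‖ ^ 2 * f z := by
  have hR₂ : 0 < R₂ := hR₁.trans hR₁₂
  -- bound on K
  obtain ⟨w₂, hw₂, hwmax⟩ := (isCompact_closedBall (0:EuclideanSpace ℝ (Fin d)) R₂).exists_isMaxOn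
    ⟨0, by simp [hR₂.le]⟩ hKcont.continuousOn
  set M := K w₂ with hMdef
  have hM0 : 0 < M := lt_of_lt_of_le (hKpos 0 (by simp [hR₁.le]))
    (hwmax (by simp [mem_closedBall_iff_norm, hR₂.le]))
  have hMle : ∀ x, K x ≤ M := by
    intro x
    by_cases hx : ‖x‖ ≤ R₂
    · exact hwmax (by simpa [mem_closedBall_iff_norm] using hx)
    · rw [hKzero x (le_of_not_ge hx)]; exact hM0.le
  obtain ⟨C, hC, hCbound⟩ := kernel_bound d K hKcont hKnonneg R₁ R₂ hR₁ hR₁₂ hKpos hKzero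
  refine ⟨C, hC, ?_⟩
  intro f hfm hf0 hfint hfkin
  set ρ : EuclideanSpace ℝ (Fin d) → ℝ := fun x => ∫ v, f (x, v) with hρdef
  set rt : EuclideanSpace ℝ (Fin d) → ℝ :=
    fun x => ∫ z : EuclideanSpace ℝ (Fin d) × EuclideanSpace ℝ (Fin d), K (x - z.1) * f z
    with hrtdef
  set m : EuclideanSpace ℝ (Fin d) → EuclideanSpace ℝ (Fin d) :=
    fun x => ∫ z : EuclideanSpace ℝ (Fin d) × EuclideanSpace ℝ (Fin d), (K (x - z.1) * f z) • z.2
    with hmdef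
  set E := ∫ z : EuclideanSpace ℝ (Fin d) × EuclideanSpace ℝ (Fin d), ‖z.2‖ ^ 2 * f z with hEdef
  have hE0 : 0 ≤ E := integral_nonneg fun z => mul_nonneg (sq_nonneg _) (hf0 z)
  have hρ0 : ∀ x, 0 ≤ ρ x := fun x => integral_nonneg fun v => hf0 _
  have hρm : Measurable ρ := hfm.stronglyMeasurable.integral_prod_right'.measurable
  have hρint : Integrable ρ := by
    rw [hρdef]
    have := hfint
    rw [Measure.volume_eq_prod _ _] at this
    exact this.integral_prod_left
  -- measurability of the kernel factor
  have hgm : ∀ x : EuclideanSpace ℝ (Fin d),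
      Measurable (fun z : EuclideanSpace ℝ (Fin d) × EuclideanSpace ℝ (Fin d) =>
        K (x - z.1) * f z) := fun x =>
    (hKcont.measurable.comp (measurable_const.sub measurable_fst)).mul hfm
  have hg0 : ∀ (x : EuclideanSpace ℝ (Fin d))
      (z : EuclideanSpace ℝ (Fin d) × EuclideanSpace ℝ (Fin d)),
      0 ≤ K (x - z.1) * f z := fun x z => mul_nonneg (hKnonneg _) (hf0 z)
  have hgint : ∀ x : EuclideanSpace ℝ (Fin d),
      Integrable (fun z : EuclideanSpace ℝ (Fin d) × EuclideanSpace ℝ (Fin d) =>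
        K (x - z.1) * f z) := by
    intro x
    refine (hfint.const_mul M).mono (hgm x).aestronglyMeasurable ?_
    refine Filter.Eventually.of_forall fun z => ?_
    rw [Real.norm_of_nonneg (hg0 x z), Real.norm_of_nonneg (mul_nonneg hM0.le (hf0 z))]
    exact mul_le_mul_of_nonneg_right (hMle _) (hf0 z)
  have hrt0 : ∀ x, 0 ≤ rt x := fun x => integral_nonneg (hg0 x)
  have hrtm : Measurable rt := by
    have hF : StronglyMeasurable fun p :
        EuclideanSpace ℝ (Fin d) × (EuclideanSpace ℝ (Fin d) × EuclideanSpace ℝ (Fin d)) =>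
        K (p.1 - p.2.1) * f p.2 :=
      ((hKcont.measurable.comp (measurable_fst.sub
        (measurable_fst.comp measurable_snd))).mul (hfm.comp measurable_snd)).stronglyMeasurable
    exact hF.integral_prod_right'.measurable
  have hmm : Measurable m := by
    have hF : StronglyMeasurable fun p :
        EuclideanSpace ℝ (Fin d) × (EuclideanSpace ℝ (Fin d) × EuclideanSpace ℝ (Fin d)) =>
        (K (p.1 - p.2.1) * f p.2) • p.2.2 :=
      (((hKcont.measurable.comp (measurable_fst.sub
        (measurable_fst.comp measurable_snd))).mul (hfm.comp measurable_snd)).smul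
        (measurable_snd.comp measurable_snd)).stronglyMeasurable
    exact hF.integral_prod_right'.measurable
  -- rt as convolution of K with ρ
  have hrt_eq : ∀ x, rt x = ∫ x', K (x - x') * ρ x' := by
    intro x
    have hgp : Integrable (fun z : EuclideanSpace ℝ (Fin d) × EuclideanSpace ℝ (Fin d) =>
        K (x - z.1) * f z)
        ((volume : Measure (EuclideanSpace ℝ (Fin d))).prod volume) := by
      rw [← Measure.volume_eq_prod _ _]; exact hgint x
    calc rt x = ∫ z : EuclideanSpace ℝ (Fin d) × EuclideanSpace ℝ (Fin d),
          K (x - z.1) * f z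
          ∂((volume : Measure (EuclideanSpace ℝ (Fin d))).prod volume) := by
          rw [← Measure.volume_eq_prod _ _]
      _ = ∫ x', ∫ v, K (x - x') * f (x', v) := integral_prod _ hgp
      _ = ∫ x', K (x - x') * ρ x' := by
          refine integral_congr_ae (Filter.Eventually.of_forall fun x' => ?_)
          simp only
          rw [integral_const_mul]
  -- the weighted second moment
  set J : EuclideanSpace ℝ (Fin d) → ℝ :=
    fun x => ∫ z : EuclideanSpace ℝ (Fin d) × EuclideanSpace ℝ (Fin d),
      (K (x - z.1) * f z) * ‖z.2‖ ^ 2 with hJdef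
  have hJ0 : ∀ x, 0 ≤ J x := fun x =>
    integral_nonneg fun z => mul_nonneg (hg0 x z) (sq_nonneg _)
  have hJint : ∀ x : EuclideanSpace ℝ (Fin d),
      Integrable (fun z : EuclideanSpace ℝ (Fin d) × EuclideanSpace ℝ (Fin d) =>
        (K (x - z.1) * f z) * ‖z.2‖ ^ 2) := by
    intro x
    refine (hfkin.const_mul M).mono ((hgm x).mul
      (measurable_snd.norm.pow measurable_const)).aestronglyMeasurable
      (Filter.Eventually.of_forall fun z => ?_)
    rw [Real.norm_of_nonneg (mul_nonneg (hg0 x z) (sq_nonneg _)),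
      Real.norm_of_nonneg (mul_nonneg hM0.le (mul_nonneg (sq_nonneg _) (hf0 z)))]
    have h1 : K (x - z.1) * f z ≤ M * f z := mul_le_mul_of_nonneg_right (hMle _) (hf0 z)
    nlinarith [sq_nonneg ‖z.2‖, hf0 z]
  have hgvint : ∀ x : EuclideanSpace ℝ (Fin d),
      Integrable (fun z : EuclideanSpace ℝ (Fin d) × EuclideanSpace ℝ (Fin d) =>
        (K (x - z.1) * f z) * ‖z.2‖) := by
    intro x
    refine ((hfint.add hfkin).const_mul M).mono ((hgm x).mul
      measurable_snd.norm).aestronglyMeasurable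
      (Filter.Eventually.of_forall fun z => ?_)
    simp only [Pi.add_apply]
    rw [Real.norm_of_nonneg (mul_nonneg (hg0 x z) (norm_nonneg _)),
      Real.norm_of_nonneg (mul_nonneg hM0.le (add_nonneg (hf0 z)
        (mul_nonneg (sq_nonneg _) (hf0 z))))]
    have h1 : K (x - z.1) * f z ≤ M * f z := mul_le_mul_of_nonneg_right (hMle _) (hf0 z)
    have h2 : ‖z.2‖ ≤ 1 + ‖z.2‖^2 := by nlinarith [sq_nonneg (‖z.2‖ - 1)]
    nlinarith [norm_nonneg z.2, hf0 z, hM0.le, mul_nonneg (hg0 x z) (norm_nonneg z.2),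
      mul_nonneg (mul_nonneg hM0.le (hf0 z)) (sq_nonneg ‖z.2‖)]
  -- Cauchy-Schwarz
  have hCS : ∀ x, ‖m x‖^2 ≤ rt x * J x := fun x =>
    vec_cs (fun z => K (x - z.1) * f z) (fun z => z.2) (hg0 x)
      (hgm x).aemeasurable measurable_snd.aestronglyMeasurable (hgint x) (hgvint x) (hJint x)
  -- pointwise estimate
  have hpoint : ∀ x, ρ x * ‖(rt x)⁻¹ • m x‖^2 ≤ (ρ x * (rt x)⁻¹) * J x := by
    intro x
    rcases eq_or_lt_of_le (hrt0 x) with h0 | hpos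
    · rw [← h0]; simp
    · have hne : rt x ≠ 0 := hpos.ne'
      have h1 : ‖(rt x)⁻¹ • m x‖^2 = (rt x)⁻¹^2 * ‖m x‖^2 := by
        rw [norm_smul, Real.norm_of_nonneg (inv_nonneg.mpr (hrt0 x)), mul_pow]
      rw [h1]
      have key : (rt x)⁻¹^2 * ‖m x‖^2 ≤ (rt x)⁻¹ * J x := by
        calc (rt x)⁻¹^2 * ‖m x‖^2 ≤ (rt x)⁻¹^2 * (rt x * J x) :=
            mul_le_mul_of_nonneg_left (hCS x) (by positivity)
          _ = (rt x)⁻¹ * J x := by field_simp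
      calc ρ x * ((rt x)⁻¹^2 * ‖m x‖^2) ≤ ρ x * ((rt x)⁻¹ * J x) :=
            mul_le_mul_of_nonneg_left key (hρ0 x)
        _ = (ρ x * (rt x)⁻¹) * J x := by ring
  -- pass to lintegrals
  have hF0 : ∀ x, 0 ≤ ρ x * ‖(rt x)⁻¹ • m x‖^2 := fun x => mul_nonneg (hρ0 x) (sq_nonneg _)
  have hFm : Measurable fun x => ρ x * ‖(rt x)⁻¹ • m x‖^2 :=
    hρm.mul ((hrtm.inv.smul hmm).norm.pow measurable_const)
  have hkin0 : ∀ z : EuclideanSpace ℝ (Fin d) × EuclideanSpace ℝ (Fin d),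
      0 ≤ ‖z.2‖^2 * f z := fun z => mul_nonneg (sq_nonneg _) (hf0 z)
  have main : (∫⁻ x, ENNReal.ofReal (ρ x * ‖(rt x)⁻¹ • m x‖^2)) ≤ ENNReal.ofReal (C * E) := by
    calc ∫⁻ x, ENNReal.ofReal (ρ x * ‖(rt x)⁻¹ • m x‖^2)
        ≤ ∫⁻ x, ENNReal.ofReal ((ρ x * (rt x)⁻¹) * J x) :=
          lintegral_mono fun x => ENNReal.ofReal_le_ofReal (hpoint x)
      _ = ∫⁻ x, ∫⁻ z, ENNReal.ofReal (ρ x * (rt x)⁻¹) *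
            ENNReal.ofReal ((K (x - z.1) * f z) * ‖z.2‖^2) := by
          refine lintegral_congr fun x => ?_
          rw [ENNReal.ofReal_mul (mul_nonneg (hρ0 x) (inv_nonneg.mpr (hrt0 x))),
            ofReal_integral_eq_lintegral_ofReal (hJint x)
              (Filter.Eventually.of_forall fun z => mul_nonneg (hg0 x z) (sq_nonneg _)),
            ← lintegral_const_mul' _ _ ENNReal.ofReal_ne_top]
      _ = ∫⁻ z, ∫⁻ x, ENNReal.ofReal (ρ x * (rt x)⁻¹) *
            ENNReal.ofReal ((K (x - z.1) * f z) * ‖z.2‖^2) := by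
          have hmeas : Measurable fun p :
              EuclideanSpace ℝ (Fin d) × (EuclideanSpace ℝ (Fin d) × EuclideanSpace ℝ (Fin d)) =>
              ENNReal.ofReal (ρ p.1 * (rt p.1)⁻¹) *
                ENNReal.ofReal ((K (p.1 - p.2.1) * f p.2) * ‖p.2.2‖^2) :=
            (((hρm.mul hrtm.inv).comp measurable_fst).ennreal_ofReal).mul
              ((((hKcont.measurable.comp (measurable_fst.sub
                (measurable_fst.comp measurable_snd))).mul
                (hfm.comp measurable_snd)).mul
                ((measurable_snd.comp measurable_snd).norm.pow
                  measurable_const)).ennreal_ofReal)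
          exact lintegral_lintegral_swap hmeas.aemeasurable
      _ ≤ ∫⁻ z : EuclideanSpace ℝ (Fin d) × EuclideanSpace ℝ (Fin d),
            ENNReal.ofReal (‖z.2‖^2 * f z) * ENNReal.ofReal C := by
          refine lintegral_mono fun z => ?_
          have hrw : ∀ x, ENNReal.ofReal (ρ x * (rt x)⁻¹) *
              ENNReal.ofReal ((K (x - z.1) * f z) * ‖z.2‖^2)
              = ENNReal.ofReal (‖z.2‖^2 * f z) *
                (ENNReal.ofReal (K (x - z.1)) * ENNReal.ofReal (ρ x * (rt x)⁻¹)) := by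
            intro x
            have hre : (K (x - z.1) * f z) * ‖z.2‖^2 = K (x - z.1) * (‖z.2‖^2 * f z) := by ring
            rw [hre, ENNReal.ofReal_mul (hKnonneg _)]
            ring
          calc (∫⁻ x, ENNReal.ofReal (ρ x * (rt x)⁻¹) *
                ENNReal.ofReal ((K (x - z.1) * f z) * ‖z.2‖^2))
              = ENNReal.ofReal (‖z.2‖^2 * f z) *
                ∫⁻ x, ENNReal.ofReal (K (x - z.1)) * ENNReal.ofReal (ρ x * (rt x)⁻¹) := by
                simp_rw [hrw]
                rw [lintegral_const_mul' _ _ ENNReal.ofReal_ne_top]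
            _ ≤ ENNReal.ofReal (‖z.2‖^2 * f z) * ENNReal.ofReal C := by
                refine mul_le_mul_right ?_ _
                refine le_trans (le_of_eq ?_) (hCbound ρ hρm hρ0 hρint z.1)
                refine lintegral_congr fun x => ?_
                rw [hrt_eq x]
      _ = ENNReal.ofReal C * ENNReal.ofReal E := by
          rw [lintegral_mul_const' _ _ ENNReal.ofReal_ne_top,
            ← ofReal_integral_eq_lintegral_ofReal hfkin (Filter.Eventually.of_forall hkin0)]
          ring
      _ = ENNReal.ofReal (C * E) := (ENNReal.ofReal_mul hC.le).symm
  -- conclude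
  have hL : (∫ x, ρ x * ‖(rt x)⁻¹ • m x‖^2)
      = (∫⁻ x, ENNReal.ofReal (ρ x * ‖(rt x)⁻¹ • m x‖^2)).toReal :=
    integral_eq_lintegral_of_nonneg_ae (Filter.Eventually.of_forall hF0)
      hFm.aestronglyMeasurable
  show (∫ x, ρ x * ‖(rt x)⁻¹ • m x‖^2) ≤ C * E
  rw [hL]
  calc (∫⁻ x, ENNReal.ofReal (ρ x * ‖(rt x)⁻¹ • m x‖^2)).toReal
      ≤ (ENNReal.ofReal (C * E)).toReal :=
        ENNReal.toReal_mono ENNReal.ofReal_ne_top main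
    _ = C * E := ENNReal.toReal_ofReal (by positivity)
end
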